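/- Let Ũ ⊆ ℝ^r be open, let s ≥ 2 and 0 < s₁ < s, and let G : Ũ → ℝ^{s×s} be C^∞ with rank G(x) = s₁ for all x ∈ Ũ. Then every x₀ ∈ Ũ has an open neighborhood U₀ ⊆ Ũ on which there exist C^∞ maps G̃ : U₀ → ℝ^{s×s₁} and R : U₀ → ℝ^{s₁×s}, each of rank s₁ at every point of U₀, such that G(x) = G̃(x)·R(x) for all x ∈ U₀. Moreover, after a suitable permutation of the columns of G, one may take G̃(x) to consist of s₁ columns of G(x) and R(x) = (A(x), I_{s₁}) for a C^∞ map A : U₀ → ℝ^{s₁×(s−s₁)}. -/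

import Mathlib

open Set Matrix

section Aux

variable {E : Type*} [NormedAddCommGroup E] [NormedSpace ℝ E] {U : Set E}

private lemma aux_prod {ι : Type*} (t : Finset ι) (f : ι → E → ℝ)
    (h : ∀ i ∈ t, ContDiffOn ℝ (⊤ : ℕ∞) (f i) U) :
    ContDiffOn ℝ (⊤ : ℕ∞) (fun x => ∏ i ∈ t, f i x) U := by
  classical
  induction t using Finset.induction_on with
  | empty => simpa using contDiffOn_const
  | insert a t' hni ih =>
    simp only [Finset.prod_insert hni]
    exact (h a (Finset.mem_insert_self a t')).mul
      (ih fun i hi => h i (Finset.mem_insert_of_mem hi))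

private lemma aux_det {k : ℕ} (M : E → Matrix (Fin k) (Fin k) ℝ)
    (h : ∀ i j, ContDiffOn ℝ (⊤ : ℕ∞) (fun x => M x i j) U) :
    ContDiffOn ℝ (⊤ : ℕ∞) (fun x => (M x).det) U := by
  simp only [Matrix.det_apply']
  exact ContDiffOn.sum fun σ _ =>
    contDiffOn_const.mul (aux_prod Finset.univ (fun i x => M x (σ i) i) fun i _ => h _ _)

private lemma aux_mulmat {a b c : ℕ} (M : E → Matrix (Fin a) (Fin b) ℝ)
    (N : E → Matrix (Fin b) (Fin c) ℝ)
    (hM : ∀ i j, ContDiffOn ℝ (⊤ : ℕ∞) (fun x => M x i j) U)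
    (hN : ∀ i j, ContDiffOn ℝ (⊤ : ℕ∞) (fun x => N x i j) U) :
    ∀ i j, ContDiffOn ℝ (⊤ : ℕ∞) (fun x => (M x * N x) i j) U := by
  intro i j
  simp only [Matrix.mul_apply]
  exact ContDiffOn.sum fun p _ => (hM i p).mul (hN p j)

private lemma aux_inv {k : ℕ} (M : E → Matrix (Fin k) (Fin k) ℝ)
    (h : ∀ i j, ContDiffOn ℝ (⊤ : ℕ∞) (fun x => M x i j) U)
    (hdet : ∀ x ∈ U, (M x).det ≠ 0) :
    ∀ i j, ContDiffOn ℝ (⊤ : ℕ∞) (fun x => (M x)⁻¹ i j) U := by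
  intro i j
  have hrw : ∀ x, (M x)⁻¹ i j = ((M x).det)⁻¹ * ((M x).updateRow j (Pi.single i 1)).det := by
    intro x
    rw [Matrix.inv_def, Matrix.smul_apply, Ring.inverse_eq_inv, Matrix.adjugate_apply,
      smul_eq_mul]
  simp only [hrw]
  refine ((aux_det M h).inv hdet).mul (aux_det _ ?_)
  intro a b
  by_cases hab : a = j
  · simp only [Matrix.updateRow_apply, hab, if_pos rfl]
    exact contDiffOn_const
  · simp only [Matrix.updateRow_apply, if_neg hab]
    exact h a b

end Aux

/-- Local smooth rank factorization of a constant-rank matrix-valued map: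
if `G : Ut → ℝ^{s×s}` is `C^∞` with `rank G(x) = s₁` on `Ut` (`0 < s₁ < s`), then near every
`x₀ ∈ Ut` there are `C^∞` maps `G̃ : U₀ → ℝ^{s×s₁}` and `R : U₀ → ℝ^{s₁×s}`, each of rank `s₁`
at every point, with `G = G̃·R`; moreover (after a suitable permutation `σ` of the columns
of `G`) one may take `G̃(x)` to consist of `s₁` columns of `G(x)` and `R(x) = (A(x), I_{s₁})`
for a `C^∞` map `A`. -/
theorem stmt4 (r s s₁ : ℕ) (hs : 2 ≤ s) (hs₁0 : 0 < s₁) (hs₁s : s₁ < s)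
    (Ut : Set (Fin r → ℝ)) (hUt : IsOpen Ut)
    (G : (Fin r → ℝ) → Matrix (Fin s) (Fin s) ℝ)
    (hG : ContDiffOn ℝ (⊤ : ℕ∞) (fun x i j => G x i j) Ut)
    (hrank : ∀ x ∈ Ut, (G x).rank = s₁) :
    ∀ x₀ ∈ Ut, ∃ U₀ : Set (Fin r → ℝ), IsOpen U₀ ∧ x₀ ∈ U₀ ∧ U₀ ⊆ Ut ∧
      ∃ (Gt : (Fin r → ℝ) → Matrix (Fin s) (Fin s₁) ℝ)
        (R : (Fin r → ℝ) → Matrix (Fin s₁) (Fin s) ℝ),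
        ContDiffOn ℝ (⊤ : ℕ∞) (fun x i j => Gt x i j) U₀ ∧
        ContDiffOn ℝ (⊤ : ℕ∞) (fun x i j => R x i j) U₀ ∧
        (∀ x ∈ U₀, (Gt x).rank = s₁ ∧ (R x).rank = s₁ ∧ G x = Gt x * R x) ∧
        ∃ (σ : Equiv.Perm (Fin s)) (e : (Fin (s - s₁) ⊕ Fin s₁) ≃ Fin s)
          (A : (Fin r → ℝ) → Matrix (Fin s₁) (Fin (s - s₁)) ℝ),
          ContDiffOn ℝ (⊤ : ℕ∞) (fun x i j => A x i j) U₀ ∧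
          ∀ x ∈ U₀,
            (∀ i k, Gt x i k = G x i (σ (e (Sum.inr k)))) ∧
            (∀ k j, R x k j =
              Sum.elim (fun l => A x k l) (fun k' => if k = k' then (1 : ℝ) else 0)
                (e.symm (σ⁻¹ j))) := by
  classical
  intro x₀ hx₀
  -- extract `s₁` linearly independent columns of `G x₀`
  have hcolrank : Module.finrank ℝ (Submodule.span ℝ (Set.range (G x₀)ᵀ)) = s₁ := by
    rw [← hrank x₀ hx₀, Matrix.rank_eq_finrank_span_cols]; rfl
  obtain ⟨b, hbsub, hbspan, hbli⟩ := exists_linearIndependent ℝ (Set.range (G x₀)ᵀ)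
  haveI : Fintype b := ((Set.finite_range _).subset hbsub).fintype
  have hbcard : Fintype.card b = s₁ := by
    rw [← Set.toFinset_card, ← finrank_span_set_eq_card hbli, hbspan, hcolrank]
  let eb : Fin s₁ ≃ b := (Fintype.equivFinOfCardEq hbcard).symm
  have hmem : ∀ v : b, (v : Fin s → ℝ) ∈ Set.range (G x₀)ᵀ := fun v => hbsub v.2
  let ι : Fin s₁ → Fin s := fun k => (hmem (eb k)).choose
  have hιcol : ∀ k, (G x₀)ᵀ (ι k) = (eb k : Fin s → ℝ) := fun k => (hmem (eb k)).choose_spec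
  have hLI : LinearIndependent ℝ (fun k => (G x₀)ᵀ (ι k)) := by
    have h1 : (fun k => (G x₀)ᵀ (ι k)) = (fun v : b => (v : Fin s → ℝ)) ∘ eb := by
      funext k; rw [hιcol]; rfl
    rw [h1]
    exact hbli.comp eb eb.injective
  have hιinj : Function.Injective ι := by
    intro k k' hkk'
    have : (eb k : Fin s → ℝ) = (eb k' : Fin s → ℝ) := by rw [← hιcol, ← hιcol, hkk']
    exact eb.injective (Subtype.ext this)
  -- build the index equivalence `e`
  let T : Finset (Fin s) := Finset.univ.image ι
  have hT : T.card = s₁ := by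
    rw [Finset.card_image_of_injective _ hιinj, Finset.card_univ, Fintype.card_fin]
  have hTc : Fintype.card (↥(Tᶜ : Finset (Fin s))) = s - s₁ := by
    rw [Fintype.card_coe, Finset.card_compl, hT, Fintype.card_fin]
  let g : Fin (s - s₁) ≃ ↥(Tᶜ : Finset (Fin s)) := (Fintype.equivFinOfCardEq hTc).symm
  let f : (Fin (s - s₁) ⊕ Fin s₁) → Fin s := Sum.elim (fun l => ((g l : Fin s))) ι
  have hιT : ∀ k, ι k ∈ T := fun k => Finset.mem_image_of_mem ι (Finset.mem_univ k)
  have hgTc : ∀ l, ((g l : Fin s)) ∉ T := fun l => Finset.mem_compl.1 (g l).2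
  have hfbij : Function.Bijective f := by
    rw [Fintype.bijective_iff_injective_and_card]
    constructor
    · rintro (l | k) (l' | k') hab
      · simp only [f, Sum.elim_inl] at hab
        rw [g.injective (Subtype.ext hab)]
      · simp only [f, Sum.elim_inl, Sum.elim_inr] at hab
        exact absurd (by rw [hab]; exact hιT k') (hgTc l)
      · simp only [f, Sum.elim_inl, Sum.elim_inr] at hab
        exact absurd (by rw [← hab]; exact hιT k) (hgTc l')
      · simp only [f, Sum.elim_inr] at hab
        rw [hιinj hab]
    · simp [Nat.sub_add_cancel hs₁s.le]
  let e : (Fin (s - s₁) ⊕ Fin s₁) ≃ Fin s := Equiv.ofBijective f hfbij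
  have he_inr : ∀ k, e (Sum.inr k) = ι k := fun _ => rfl
  -- the matrices
  set Gt : (Fin r → ℝ) → Matrix (Fin s) (Fin s₁) ℝ :=
    fun x => Matrix.of fun i k => G x i (e (Sum.inr k)) with hGt_def
  set B : (Fin r → ℝ) → Matrix (Fin s₁) (Fin s₁) ℝ := fun x => (Gt x)ᵀ * Gt x with hB_def
  -- `det (B x₀) ≠ 0`
  have hGtLI : LinearIndependent ℝ (Gt x₀)ᵀ := by
    have h1 : (Gt x₀)ᵀ = fun k => (G x₀)ᵀ (ι k) := by funext k i; rfl
    rw [h1]; exact hLI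
  have hdetB₀ : (B x₀).det ≠ 0 := by
    intro h0
    obtain ⟨v, hv0, hv⟩ := Matrix.exists_mulVec_eq_zero_iff.2 h0
    have hker : (Gt x₀) *ᵥ v = 0 := by
      have hmem : v ∈ LinearMap.ker ((Gt x₀)ᵀ * Gt x₀).mulVecLin := by
        rw [LinearMap.mem_ker, Matrix.mulVecLin_apply]; exact hv
      rw [Matrix.ker_mulVecLin_transpose_mul_self] at hmem
      simpa [Matrix.mulVecLin_apply] using hmem
    apply hv0
    funext k
    refine Fintype.linearIndependent_iff.1 hGtLI v ?_ k
    funext i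
    have h2 := congrFun hker i
    simp only [Matrix.mulVec, dotProduct, Pi.zero_apply] at h2
    simpa [Finset.sum_apply, mul_comm] using h2
  -- smoothness of the entries
  have hGe : ∀ i j, ContDiffOn ℝ (⊤ : ℕ∞) (fun x => G x i j) Ut := fun i j =>
    contDiffOn_pi.1 (contDiffOn_pi.1 hG i) j
  have hGte : ∀ i k, ContDiffOn ℝ (⊤ : ℕ∞) (fun x => Gt x i k) Ut := fun i k => hGe _ _
  have hBe : ∀ k k', ContDiffOn ℝ (⊤ : ℕ∞) (fun x => B x k k') Ut := by
    intro k k'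
    simp only [hB_def, Matrix.mul_apply, Matrix.transpose_apply]
    exact ContDiffOn.sum fun i _ => (hGte i k).mul (hGte i k')
  have hdetBe : ContDiffOn ℝ (⊤ : ℕ∞) (fun x => (B x).det) Ut := aux_det B hBe
  -- the neighborhood
  set U₀ : Set (Fin r → ℝ) := Ut ∩ (fun x => (B x).det) ⁻¹' ({0}ᶜ) with hU₀_def
  have hU₀open : IsOpen U₀ :=
    hdetBe.continuousOn.isOpen_inter_preimage hUt isOpen_compl_singleton
  have hx₀U₀ : x₀ ∈ U₀ := ⟨hx₀, hdetB₀⟩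
  have hU₀sub : U₀ ⊆ Ut := inter_subset_left
  have hdetU₀ : ∀ x ∈ U₀, (B x).det ≠ 0 := fun x hx => hx.2
  -- the remaining matrices
  set Gl : (Fin r → ℝ) → Matrix (Fin s) (Fin (s - s₁)) ℝ :=
    fun x => Matrix.of fun i l => G x i (e (Sum.inl l)) with hGl_def
  set A : (Fin r → ℝ) → Matrix (Fin s₁) (Fin (s - s₁)) ℝ :=
    fun x => (B x)⁻¹ * ((Gt x)ᵀ * Gl x) with hA_def
  set R : (Fin r → ℝ) → Matrix (Fin s₁) (Fin s) ℝ :=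
    fun x => Matrix.of fun k j =>
      Sum.elim (fun l => A x k l) (fun k' => if k = k' then (1 : ℝ) else 0) (e.symm j)
    with hR_def
  set S : Matrix (Fin s) (Fin s₁) ℝ :=
    Matrix.of fun j k => if j = e (Sum.inr k) then (1 : ℝ) else 0 with hS_def
  -- pointwise facts on `U₀`
  have key : ∀ x ∈ U₀, (Gt x).rank = s₁ ∧ (R x).rank = s₁ ∧ G x = Gt x * R x := by
    intro x hxU
    have hx : x ∈ Ut := hU₀sub hxU
    have hdx : IsUnit (B x).det := (hdetU₀ x hxU).isUnit
    have hBunit : IsUnit (B x) := (Matrix.isUnit_iff_isUnit_det _).2 hdx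
    have hBinvB : (B x)⁻¹ * B x = 1 := Matrix.nonsing_inv_mul _ hdx
    have hBrank : (B x).rank = s₁ := by
      rw [Matrix.rank_of_isUnit _ hBunit, Fintype.card_fin]
    have hGtrank : (Gt x).rank = s₁ := by
      calc (Gt x).rank = ((Gt x)ᵀ * Gt x).rank := (Matrix.rank_transpose_mul_self _).symm
        _ = (B x).rank := rfl
        _ = s₁ := hBrank
    have hGtS : Gt x = G x * S := by
      ext i k
      simp [hGt_def, hS_def, Matrix.mul_apply]
    have hrange_le : LinearMap.range (Gt x).mulVecLin ≤ LinearMap.range (G x).mulVecLin := by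
      rintro _ ⟨v, rfl⟩
      exact ⟨S *ᵥ v, by
        rw [Matrix.mulVecLin_apply, Matrix.mulVecLin_apply, Matrix.mulVec_mulVec, ← hGtS]⟩
    have hrange_eq : LinearMap.range (Gt x).mulVecLin = LinearMap.range (G x).mulVecLin := by
      apply Submodule.eq_of_le_of_finrank_le hrange_le
      have h2 : Module.finrank ℝ (LinearMap.range (G x).mulVecLin) = s₁ := hrank x hx
      have h3 : Module.finrank ℝ (LinearMap.range (Gt x).mulVecLin) = s₁ := hGtrank
      rw [h2, h3]
    have hproj : ∀ v ∈ LinearMap.range (Gt x).mulVecLin,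
        (Gt x) *ᵥ ((B x)⁻¹ *ᵥ ((Gt x)ᵀ *ᵥ v)) = v := by
      rintro _ ⟨w, rfl⟩
      rw [Matrix.mulVecLin_apply]
      have h1 : (Gt x)ᵀ *ᵥ (Gt x *ᵥ w) = B x *ᵥ w := Matrix.mulVec_mulVec w (Gt x)ᵀ (Gt x)
      have h2 : (B x)⁻¹ *ᵥ (B x *ᵥ w) = w := by
        rw [Matrix.mulVec_mulVec, hBinvB, Matrix.one_mulVec]
      rw [h1, h2]
    have hcolG : ∀ j, (fun i => G x i j) ∈ LinearMap.range (Gt x).mulVecLin := by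
      intro j
      rw [hrange_eq]
      refine ⟨Pi.single j 1, ?_⟩
      rw [Matrix.mulVecLin_apply, Matrix.mulVec_single]
      funext i; simp
    have hAcol : ∀ l, (fun k => A x k l) =
        (B x)⁻¹ *ᵥ ((Gt x)ᵀ *ᵥ (fun i => G x i (e (Sum.inl l)))) := by
      intro l
      funext k
      simp [hA_def, hGl_def, Matrix.mul_apply, Matrix.mulVec, dotProduct]
    have hGtA : ∀ l, (Gt x) *ᵥ (fun k => A x k l) = fun i => G x i (e (Sum.inl l)) := by
      intro l; rw [hAcol]; exact hproj _ (hcolG _)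
    have hfact : G x = Gt x * R x := by
      ext i j
      rcases hj : e.symm j with l | k'
      · have hj' : e (Sum.inl l) = j := by rw [← hj, Equiv.apply_symm_apply]
        have h4 : (Gt x * R x) i j = ((Gt x) *ᵥ (fun k => A x k l)) i := by
          simp [Matrix.mul_apply, Matrix.mulVec, dotProduct, hR_def, hj]
        rw [h4, hGtA, hj']
      · have hj' : e (Sum.inr k') = j := by rw [← hj, Equiv.apply_symm_apply]
        have h4 : (Gt x * R x) i j = Gt x i k' := by
          simp [Matrix.mul_apply, hR_def, hj]
        rw [h4]
        simp [hGt_def, hj']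
    have hRS : R x * S = 1 := by
      ext k k'
      simp [hR_def, hS_def, Matrix.mul_apply, Matrix.one_apply]
    have hRrank : (R x).rank = s₁ := by
      refine le_antisymm (by simpa using (R x).rank_le_card_height) ?_
      have h5 : (R x * S).rank = s₁ := by rw [hRS, Matrix.rank_one, Fintype.card_fin]
      calc s₁ = (R x * S).rank := h5.symm
        _ ≤ (R x).rank := Matrix.rank_mul_le_left _ _
    exact ⟨hGtrank, hRrank, hfact⟩
  -- smoothness of `A` and `R`
  have hBinv_e : ∀ k k', ContDiffOn ℝ (⊤ : ℕ∞) (fun x => (B x)⁻¹ k k') U₀ :=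
    aux_inv B (fun k k' => (hBe k k').mono hU₀sub) hdetU₀
  have hGtGl : ∀ p l, ContDiffOn ℝ (⊤ : ℕ∞) (fun x => ((Gt x)ᵀ * Gl x) p l) U₀ :=
    aux_mulmat (fun x => (Gt x)ᵀ) Gl (fun k i => (hGte i k).mono hU₀sub)
      (fun i l => (hGe _ _).mono hU₀sub)
  have hAe : ∀ k l, ContDiffOn ℝ (⊤ : ℕ∞) (fun x => A x k l) U₀ :=
    aux_mulmat (fun x => (B x)⁻¹) (fun x => (Gt x)ᵀ * Gl x) hBinv_e hGtGl
  have hRe : ∀ k j, ContDiffOn ℝ (⊤ : ℕ∞) (fun x => R x k j) U₀ := by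
    intro k j
    rcases hj : e.symm j with l | k'
    · simpa [hR_def, hj] using hAe k l
    · simp only [hR_def, Matrix.of_apply, hj, Sum.elim_inr]
      exact contDiffOn_const
  refine ⟨U₀, hU₀open, hx₀U₀, hU₀sub, Gt, R, ?_, ?_, key, 1, e, A, ?_, ?_⟩
  · exact contDiffOn_pi.2 fun i => contDiffOn_pi.2 fun k => (hGte i k).mono hU₀sub
  · exact contDiffOn_pi.2 fun k => contDiffOn_pi.2 fun j => hRe k j
  · exact contDiffOn_pi.2 fun k => contDiffOn_pi.2 fun l => hAe k l
  · intro x hx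
    refine ⟨fun i k => ?_, fun k j => ?_⟩
    · simp [hGt_def]
    · simp [hR_def]
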